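/- Let q be an odd prime power and let A₁, A₂, A₃, A₄ be subsets of F_q. Then the number S of quadruples (x₁, x₂, x₃, x₄) ∈ A₁ × A₂ × A₃ × A₄ with x₁ + x₂ = (x₃ + x₄)² satisfies |S − |A₁||A₂||A₃||A₄|/q| ≤ √(q·|A₁||A₂||A₃||A₄|). -/

import Mathlib

open Finset Complex

section Aux
variable {F : Type*} [Field F] [Fintype F] [DecidableEq F]

omit [DecidableEq F] in
lemma two_ne_zero_of_odd_card (hodd : Odd (Fintype.card F)) : (2:F) ≠ 0 := by
  intro h
  have hchar : ringChar F ∣ 2 := by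
    have h' : ((2:ℕ):F) = 0 := by exact_mod_cast h
    exact (ringChar.spec F 2).mp h'
  rcases (Nat.dvd_prime Nat.prime_two).mp hchar with h1 | h1
  · exact CharP.ringChar_ne_one h1
  · have := FiniteField.even_card_iff_char_two.mp h1
    have := Nat.odd_iff.mp hodd
    omega

lemma ite_eq_char_sum (a : F) :
    (if a = 0 then (1:ℂ) else 0)
      = (Fintype.card F : ℂ)⁻¹ * ∑ ψ : AddChar F ℂ, ψ a := by
  rw [AddChar.sum_apply_eq_ite]
  have hq : (Fintype.card F : ℂ) ≠ 0 := Nat.cast_ne_zero.2 Fintype.card_ne_zero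
  split <;> simp [hq]

omit [DecidableEq F] in
lemma norm_sq_complex (z : ℂ) : ((‖z‖ : ℂ))^2 = z * (starRingEnd ℂ) z := by
  rw [Complex.mul_conj]
  norm_cast
  rw [Complex.sq_norm]

/-- Parseval for indicator sums. -/
lemma parseval (A : Finset F) :
    ∑ ψ : AddChar F ℂ, ‖∑ x ∈ A, ψ x‖ ^ 2 = (Fintype.card F : ℝ) * A.card := by
  have key : ∑ ψ : AddChar F ℂ, (∑ x ∈ A, ψ x) * (starRingEnd ℂ) (∑ x ∈ A, ψ x)
      = (Fintype.card F : ℂ) * A.card := by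
    have h1 : ∀ ψ : AddChar F ℂ, (∑ x ∈ A, ψ x) * (starRingEnd ℂ) (∑ x ∈ A, ψ x)
        = ∑ x ∈ A, ∑ y ∈ A, ψ (x - y) := by
      intro ψ
      rw [map_sum, Finset.sum_mul_sum]
      refine Finset.sum_congr rfl fun x _ => Finset.sum_congr rfl fun y _ => ?_
      rw [← AddChar.map_neg_eq_conj, ← AddChar.map_add_eq_mul, sub_eq_add_neg]
    calc ∑ ψ : AddChar F ℂ, (∑ x ∈ A, ψ x) * (starRingEnd ℂ) (∑ x ∈ A, ψ x)
        = ∑ ψ : AddChar F ℂ, ∑ x ∈ A, ∑ y ∈ A, ψ (x - y) :=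
          Finset.sum_congr rfl fun ψ _ => h1 ψ
      _ = ∑ x ∈ A, ∑ y ∈ A, ∑ ψ : AddChar F ℂ, ψ (x - y) := by
          rw [Finset.sum_comm]
          exact Finset.sum_congr rfl fun x _ => Finset.sum_comm
      _ = ∑ x ∈ A, ∑ y ∈ A, if x = y then (Fintype.card F : ℂ) else 0 := by
          refine Finset.sum_congr rfl fun x _ => Finset.sum_congr rfl fun y _ => ?_
          rw [AddChar.sum_apply_eq_ite]
          simp [sub_eq_zero]
      _ = ∑ x ∈ A, if x ∈ A then (Fintype.card F : ℂ) else 0 :=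
          Finset.sum_congr rfl fun x _ => Finset.sum_ite_eq A x fun _ => (Fintype.card F : ℂ)
      _ = (Fintype.card F : ℂ) * A.card := by
          rw [Finset.sum_congr rfl fun x hx => if_pos hx]
          simp [mul_comm]
  have : ((∑ ψ : AddChar F ℂ, ‖∑ x ∈ A, ψ x‖ ^ 2 : ℝ) : ℂ)
      = (((Fintype.card F : ℝ) * A.card : ℝ) : ℂ) := by
    push_cast
    rw [← key]
    exact Finset.sum_congr rfl fun ψ _ => norm_sq_complex _
  exact_mod_cast this

omit [DecidableEq F] in
lemma complete_square_sum (h2 : (2:F) ≠ 0) (ψ : AddChar F ℂ) (hψ : ψ ≠ 0)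
    {x x' : F} (hxx : x ≠ x') :
    ∑ u : F, ψ ((x + u)^2 - (x' + u)^2) = 0 := by
  have hd : (2*(x-x')) ≠ 0 := mul_ne_zero h2 (sub_ne_zero.2 hxx)
  have hrw : ∀ u : F, (x+u)^2 - (x'+u)^2 = (x^2 - x'^2) + (2*(x-x'))*u := fun u => by ring
  calc ∑ u : F, ψ ((x + u)^2 - (x' + u)^2)
      = ∑ u : F, ψ ((x^2 - x'^2) + (2*(x-x'))*u) := by
        exact Finset.sum_congr rfl fun u _ => by rw [hrw u]
    _ = ∑ v : F, ψ v := by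
        refine Fintype.sum_equiv ((Equiv.mulLeft₀ (2*(x-x')) hd).trans
          (Equiv.addLeft (x^2 - x'^2))) _ _ fun u => ?_
        simp [Equiv.mulLeft₀]
    _ = 0 := AddChar.sum_eq_zero_iff_ne_zero.2 hψ

lemma second_moment (h2 : (2:F) ≠ 0) (A₃ : Finset F) (ψ : AddChar F ℂ) (hψ : ψ ≠ 0) :
    ∑ y : F, ‖∑ x ∈ A₃, ψ (-(x+y)^2)‖^2 = (Fintype.card F : ℝ) * A₃.card := by
  have key : ∑ y : F, (∑ x ∈ A₃, ψ (-(x+y)^2)) * (starRingEnd ℂ) (∑ x ∈ A₃, ψ (-(x+y)^2))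
      = (Fintype.card F : ℂ) * A₃.card := by
    have h1 : ∀ y : F, (∑ x ∈ A₃, ψ (-(x+y)^2)) * (starRingEnd ℂ) (∑ x ∈ A₃, ψ (-(x+y)^2))
        = ∑ x' ∈ A₃, ∑ x ∈ A₃, ψ ((x+y)^2 - (x'+y)^2) := by
      intro y
      rw [map_sum, Finset.sum_mul_sum]
      refine Finset.sum_congr rfl fun x' _ => Finset.sum_congr rfl fun x _ => ?_
      rw [← AddChar.map_neg_eq_conj, neg_neg, ← AddChar.map_add_eq_mul]
      ring_nf
    calc ∑ y : F, (∑ x ∈ A₃, ψ (-(x+y)^2)) * (starRingEnd ℂ) (∑ x ∈ A₃, ψ (-(x+y)^2))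
        = ∑ y : F, ∑ x' ∈ A₃, ∑ x ∈ A₃, ψ ((x+y)^2 - (x'+y)^2) :=
          Finset.sum_congr rfl fun y _ => h1 y
      _ = ∑ x' ∈ A₃, ∑ x ∈ A₃, ∑ y : F, ψ ((x+y)^2 - (x'+y)^2) := by
          rw [Finset.sum_comm]
          exact Finset.sum_congr rfl fun x' _ => Finset.sum_comm
      _ = ∑ x' ∈ A₃, ∑ x ∈ A₃, if x = x' then (Fintype.card F : ℂ) else 0 := by
          refine Finset.sum_congr rfl fun x' _ => Finset.sum_congr rfl fun x _ => ?_
          split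
          · next h => subst h; simp
          · next h => exact complete_square_sum h2 ψ hψ h
      _ = ∑ x' ∈ A₃, if x' ∈ A₃ then (Fintype.card F : ℂ) else 0 :=
          Finset.sum_congr rfl fun x' _ => Finset.sum_ite_eq' A₃ x' fun _ => _
      _ = (Fintype.card F : ℂ) * A₃.card := by
          rw [Finset.sum_congr rfl fun x hx => if_pos hx]
          simp [mul_comm]
  have : ((∑ y : F, ‖∑ x ∈ A₃, ψ (-(x+y)^2)‖ ^ 2 : ℝ) : ℂ)
      = (((Fintype.card F : ℝ) * A₃.card : ℝ) : ℂ) := by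
    push_cast
    rw [← key]
    exact Finset.sum_congr rfl fun y _ => norm_sq_complex _
  exact_mod_cast this

lemma T_bound (h2 : (2:F) ≠ 0) (A₃ A₄ : Finset F) (ψ : AddChar F ℂ) (hψ : ψ ≠ 0) :
    ‖∑ x₃ ∈ A₃, ∑ x₄ ∈ A₄, ψ (-(x₃+x₄)^2)‖
      ≤ Real.sqrt ((Fintype.card F : ℝ) * A₃.card * A₄.card) := by
  set g : F → ℂ := fun y => ∑ x ∈ A₃, ψ (-(x+y)^2) with hg
  have hswap : ∑ x₃ ∈ A₃, ∑ x₄ ∈ A₄, ψ (-(x₃+x₄)^2) = ∑ y ∈ A₄, g y := Finset.sum_comm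
  rw [hswap]
  have step2 : ∑ y ∈ A₄, ‖g y‖^2 ≤ (Fintype.card F : ℝ) * A₃.card := by
    rw [← second_moment h2 A₃ ψ hψ]
    exact Finset.sum_le_sum_of_subset_of_nonneg (Finset.subset_univ A₄)
      fun y _ _ => by positivity
  calc ‖∑ y ∈ A₄, g y‖ ≤ ∑ y ∈ A₄, ‖g y‖ := norm_sum_le _ _
    _ = ∑ y ∈ A₄, 1 * ‖g y‖ := by simp
    _ ≤ Real.sqrt (∑ y ∈ A₄, (1:ℝ)^2) * Real.sqrt (∑ y ∈ A₄, ‖g y‖^2) :=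
        Real.sum_mul_le_sqrt_mul_sqrt A₄ _ _
    _ ≤ Real.sqrt (A₄.card) * Real.sqrt ((Fintype.card F : ℝ) * A₃.card) := by
        gcongr
        · simp
    _ = Real.sqrt ((Fintype.card F : ℝ) * A₃.card * A₄.card) := by
        rw [← Real.sqrt_mul (by positivity)]
        ring_nf

lemma key_expansion (A₁ A₂ A₃ A₄ : Finset F) :
    ((((A₁ ×ˢ A₂ ×ˢ A₃ ×ˢ A₄).filter (fun t : F × F × F × F =>
          t.1 + t.2.1 = (t.2.2.1 + t.2.2.2) ^ 2)).card : ℂ))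
      = (Fintype.card F : ℂ)⁻¹ * ∑ ψ : AddChar F ℂ,
          (∑ x ∈ A₁, ψ x) * (∑ x ∈ A₂, ψ x)
            * (∑ x₃ ∈ A₃, ∑ x₄ ∈ A₄, ψ (-(x₃+x₄)^2)) := by
  have factor : ∀ ψ : AddChar F ℂ,
      (∑ x ∈ A₁, ψ x) * (∑ x ∈ A₂, ψ x) * (∑ x₃ ∈ A₃, ∑ x₄ ∈ A₄, ψ (-(x₃+x₄)^2))
        = ∑ t ∈ A₁ ×ˢ A₂ ×ˢ A₃ ×ˢ A₄, ψ (t.1 + t.2.1 - (t.2.2.1 + t.2.2.2)^2) := by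
    intro ψ
    have inner : ∀ x₁ x₂ : F, ψ x₁ * ψ x₂ * (∑ x₃ ∈ A₃, ∑ x₄ ∈ A₄, ψ (-(x₃+x₄)^2))
        = ∑ x₃ ∈ A₃, ∑ x₄ ∈ A₄, ψ (x₁ + x₂ - (x₃+x₄)^2) := by
      intro x₁ x₂
      rw [Finset.mul_sum]
      refine Finset.sum_congr rfl fun x₃ _ => ?_
      rw [Finset.mul_sum]
      refine Finset.sum_congr rfl fun x₄ _ => ?_
      rw [sub_eq_add_neg, AddChar.map_add_eq_mul, AddChar.map_add_eq_mul]
    calc (∑ x ∈ A₁, ψ x) * (∑ x ∈ A₂, ψ x) * (∑ x₃ ∈ A₃, ∑ x₄ ∈ A₄, ψ (-(x₃+x₄)^2))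
        = ∑ x₁ ∈ A₁, ∑ x₂ ∈ A₂, ψ x₁ * ψ x₂ * (∑ x₃ ∈ A₃, ∑ x₄ ∈ A₄, ψ (-(x₃+x₄)^2)) := by
          rw [Finset.sum_mul_sum]
          simp only [Finset.sum_mul]
      _ = ∑ x₁ ∈ A₁, ∑ x₂ ∈ A₂, ∑ x₃ ∈ A₃, ∑ x₄ ∈ A₄, ψ (x₁ + x₂ - (x₃+x₄)^2) :=
          Finset.sum_congr rfl fun x₁ _ => Finset.sum_congr rfl fun x₂ _ => inner x₁ x₂
      _ = ∑ t ∈ A₁ ×ˢ A₂ ×ˢ A₃ ×ˢ A₄, ψ (t.1 + t.2.1 - (t.2.2.1 + t.2.2.2)^2) := by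
          simp only [Finset.sum_product]
  rw [Finset.card_filter]
  push_cast
  calc (∑ t ∈ A₁ ×ˢ A₂ ×ˢ A₃ ×ˢ A₄,
          if t.1 + t.2.1 = (t.2.2.1 + t.2.2.2) ^ 2 then (1:ℂ) else 0)
      = ∑ t ∈ A₁ ×ˢ A₂ ×ˢ A₃ ×ˢ A₄, (Fintype.card F : ℂ)⁻¹
          * ∑ ψ : AddChar F ℂ, ψ (t.1 + t.2.1 - (t.2.2.1 + t.2.2.2)^2) := by
        refine Finset.sum_congr rfl fun t _ => ?_
        rw [← ite_eq_char_sum]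
        simp [sub_eq_zero]
    _ = (Fintype.card F : ℂ)⁻¹ * ∑ t ∈ A₁ ×ˢ A₂ ×ˢ A₃ ×ˢ A₄,
          ∑ ψ : AddChar F ℂ, ψ (t.1 + t.2.1 - (t.2.2.1 + t.2.2.2)^2) := by
        rw [Finset.mul_sum]
    _ = (Fintype.card F : ℂ)⁻¹ * ∑ ψ : AddChar F ℂ,
          ∑ t ∈ A₁ ×ˢ A₂ ×ˢ A₃ ×ˢ A₄, ψ (t.1 + t.2.1 - (t.2.2.1 + t.2.2.2)^2) := by
        rw [Finset.sum_comm]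
    _ = _ := by
        congr 1
        exact Finset.sum_congr rfl fun ψ _ => (factor ψ).symm

end Aux

/-- Let `q` be an odd prime power and `A₁, A₂, A₃, A₄ ⊆ F_q`. The
number `S` of quadruples `(x₁,x₂,x₃,x₄) ∈ A₁ × A₂ × A₃ × A₄` with
`x₁ + x₂ = (x₃ + x₄)²` satisfies `|S − |A₁||A₂||A₃||A₄|/q| ≤ √(q·|A₁||A₂||A₃||A₄|)`. -/
theorem solutions_sum_eq_square {F : Type*} [Field F] [Fintype F] [DecidableEq F]
    (hodd : Odd (Fintype.card F)) (A₁ A₂ A₃ A₄ : Finset F) :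
    |(((A₁ ×ˢ A₂ ×ˢ A₃ ×ˢ A₄).filter (fun t : F × F × F × F =>
          t.1 + t.2.1 = (t.2.2.1 + t.2.2.2) ^ 2)).card : ℝ)
        - (A₁.card : ℝ) * A₂.card * A₃.card * A₄.card / (Fintype.card F : ℝ)|
      ≤ Real.sqrt ((Fintype.card F : ℝ)
          * ((A₁.card : ℝ) * A₂.card * A₃.card * A₄.card)) := by
  classical
  have h2F : (2:F) ≠ 0 := two_ne_zero_of_odd_card hodd
  have hq0 : (0:ℝ) < (Fintype.card F : ℝ) := by
    have := Fintype.card_pos (α := F)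
    positivity
  have hqC : (Fintype.card F : ℂ) ≠ 0 := Nat.cast_ne_zero.2 Fintype.card_ne_zero
  set N := ((A₁ ×ˢ A₂ ×ˢ A₃ ×ˢ A₄).filter (fun t : F × F × F × F =>
      t.1 + t.2.1 = (t.2.2.1 + t.2.2.2) ^ 2)).card with hN
  set E : Finset (AddChar F ℂ) := Finset.univ.erase 0 with hE
  have key := key_expansion A₁ A₂ A₃ A₄
  have hsplit : ∑ ψ : AddChar F ℂ, (∑ x ∈ A₁, ψ x) * (∑ x ∈ A₂, ψ x)
        * (∑ x₃ ∈ A₃, ∑ x₄ ∈ A₄, ψ (-(x₃+x₄)^2))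
      = ((A₁.card : ℂ) * A₂.card * (A₃.card * A₄.card))
        + ∑ ψ ∈ E, (∑ x ∈ A₁, ψ x) * (∑ x ∈ A₂, ψ x)
            * (∑ x₃ ∈ A₃, ∑ x₄ ∈ A₄, ψ (-(x₃+x₄)^2)) := by
    rw [← Finset.add_sum_erase Finset.univ _ (Finset.mem_univ (0 : AddChar F ℂ))]
    congr 1
    simp
  have hdiff : (((N : ℝ) - (A₁.card : ℝ) * A₂.card * A₃.card * A₄.card
        / (Fintype.card F : ℝ) : ℝ) : ℂ)
      = (Fintype.card F : ℂ)⁻¹ * ∑ ψ ∈ E, (∑ x ∈ A₁, ψ x) * (∑ x ∈ A₂, ψ x)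
          * (∑ x₃ ∈ A₃, ∑ x₄ ∈ A₄, ψ (-(x₃+x₄)^2)) := by
    push_cast
    rw [key, hsplit]
    field_simp
    ring
  rw [← Real.norm_eq_abs, ← Complex.norm_real, hdiff]
  -- now bound the norm
  have hM : ∀ ψ ∈ E, ‖∑ x₃ ∈ A₃, ∑ x₄ ∈ A₄, ψ (-(x₃+x₄)^2)‖
      ≤ Real.sqrt ((Fintype.card F : ℝ) * A₃.card * A₄.card) := fun ψ hψ =>
    T_bound h2F A₃ A₄ ψ (Finset.ne_of_mem_erase hψ)
  have step1 : ‖∑ ψ ∈ E, (∑ x ∈ A₁, ψ x) * (∑ x ∈ A₂, ψ x)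
        * (∑ x₃ ∈ A₃, ∑ x₄ ∈ A₄, ψ (-(x₃+x₄)^2))‖
      ≤ (∑ ψ ∈ E, ‖∑ x ∈ A₁, ψ x‖ * ‖∑ x ∈ A₂, ψ x‖)
          * Real.sqrt ((Fintype.card F : ℝ) * A₃.card * A₄.card) := by
    calc ‖∑ ψ ∈ E, (∑ x ∈ A₁, ψ x) * (∑ x ∈ A₂, ψ x)
          * (∑ x₃ ∈ A₃, ∑ x₄ ∈ A₄, ψ (-(x₃+x₄)^2))‖
        ≤ ∑ ψ ∈ E, ‖(∑ x ∈ A₁, ψ x) * (∑ x ∈ A₂, ψ x)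
          * (∑ x₃ ∈ A₃, ∑ x₄ ∈ A₄, ψ (-(x₃+x₄)^2))‖ := norm_sum_le _ _
      _ = ∑ ψ ∈ E, ‖∑ x ∈ A₁, ψ x‖ * ‖∑ x ∈ A₂, ψ x‖
          * ‖∑ x₃ ∈ A₃, ∑ x₄ ∈ A₄, ψ (-(x₃+x₄)^2)‖ := by
          simp [norm_mul]
      _ ≤ ∑ ψ ∈ E, ‖∑ x ∈ A₁, ψ x‖ * ‖∑ x ∈ A₂, ψ x‖
          * Real.sqrt ((Fintype.card F : ℝ) * A₃.card * A₄.card) := by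
          refine Finset.sum_le_sum fun ψ hψ => ?_
          exact mul_le_mul_of_nonneg_left (hM ψ hψ) (by positivity)
      _ = _ := by rw [← Finset.sum_mul]
  have step2 : ∑ ψ ∈ E, ‖∑ x ∈ A₁, ψ x‖ * ‖∑ x ∈ A₂, ψ x‖
      ≤ Real.sqrt ((Fintype.card F : ℝ) * A₁.card)
        * Real.sqrt ((Fintype.card F : ℝ) * A₂.card) := by
    calc ∑ ψ ∈ E, ‖∑ x ∈ A₁, ψ x‖ * ‖∑ x ∈ A₂, ψ x‖
        ≤ ∑ ψ : AddChar F ℂ, ‖∑ x ∈ A₁, ψ x‖ * ‖∑ x ∈ A₂, ψ x‖ :=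
          Finset.sum_le_sum_of_subset_of_nonneg (Finset.subset_univ E)
            fun ψ _ _ => by positivity
      _ ≤ Real.sqrt (∑ ψ : AddChar F ℂ, ‖∑ x ∈ A₁, ψ x‖^2)
          * Real.sqrt (∑ ψ : AddChar F ℂ, ‖∑ x ∈ A₂, ψ x‖^2) :=
          Real.sum_mul_le_sqrt_mul_sqrt _ _ _
      _ = _ := by rw [parseval, parseval]
  calc ‖(Fintype.card F : ℂ)⁻¹ * ∑ ψ ∈ E, (∑ x ∈ A₁, ψ x) * (∑ x ∈ A₂, ψ x)
        * (∑ x₃ ∈ A₃, ∑ x₄ ∈ A₄, ψ (-(x₃+x₄)^2))‖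
      = (Fintype.card F : ℝ)⁻¹ * ‖∑ ψ ∈ E, (∑ x ∈ A₁, ψ x) * (∑ x ∈ A₂, ψ x)
        * (∑ x₃ ∈ A₃, ∑ x₄ ∈ A₄, ψ (-(x₃+x₄)^2))‖ := by
        rw [norm_mul, norm_inv]
        norm_num
    _ ≤ (Fintype.card F : ℝ)⁻¹ * ((Real.sqrt ((Fintype.card F : ℝ) * A₁.card)
          * Real.sqrt ((Fintype.card F : ℝ) * A₂.card))
          * Real.sqrt ((Fintype.card F : ℝ) * A₃.card * A₄.card)) := by
        have h3 := step1.trans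
          (mul_le_mul_of_nonneg_right step2 (Real.sqrt_nonneg _))
        exact mul_le_mul_of_nonneg_left h3 (by positivity)
    _ = Real.sqrt ((Fintype.card F : ℝ)
          * ((A₁.card : ℝ) * A₂.card * A₃.card * A₄.card)) := by
        rw [← Real.sqrt_mul (by positivity), ← Real.sqrt_mul (by positivity)]
        rw [show (Fintype.card F : ℝ) * A₁.card * ((Fintype.card F : ℝ) * A₂.card)
            * ((Fintype.card F : ℝ) * A₃.card * A₄.card)
            = (Fintype.card F : ℝ)^2 * ((Fintype.card F : ℝ)
                * ((A₁.card : ℝ) * A₂.card * A₃.card * A₄.card)) by ring]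
        rw [Real.sqrt_mul (by positivity), Real.sqrt_sq hq0.le]
        field_simp
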